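/- Drift inequalities for the magnetization chain: for every β ≥ 0 and every n, the magnetization chain (S_t) satisfies: (i) for every state s ≥ 0 in Ω_S, E[S_{t+1} − S_t | S_t = s] ≤ (1/n)(tanh(βs) − s); (ii) for every state s ≤ 0 in Ω_S, E[S_{t+1} − S_t | S_t = s] ≥ (1/n)(tanh(βs) − s); and (iii) for every state s with |s| > 1/n, E[|S_{t+1}| | S_t = s] ≤ |s| + (1/n)(tanh(β|s|) − |s|). -/

import Mathlib

open Filter Real

namespace CW

noncomputable section

def pPlus (β s : ℝ) : ℝ := (1 + Real.tanh (β * s)) / 2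

def pMinus (β s : ℝ) : ℝ := (1 - Real.tanh (β * s)) / 2

def magVal (n : ℕ) (k : Fin (n + 1)) : ℝ := (2 * (k : ℕ) - n) / n

def magKernel (β : ℝ) (n : ℕ) (k l : Fin (n + 1)) : ℝ :=
  if (l : ℕ) + 1 = (k : ℕ) then
    ((1 + magVal n k) / 2) * pMinus β (magVal n k - 1 / n)
  else if (k : ℕ) + 1 = (l : ℕ) then
    ((1 - magVal n k) / 2) * pPlus β (magVal n k + 1 / n)
  else if l = k then
    1 - ((1 + magVal n k) / 2) * pMinus β (magVal n k - 1 / n)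
      - ((1 - magVal n k) / 2) * pPlus β (magVal n k + 1 / n)
  else 0

lemma tanh_mono' {u v : ℝ} (h : u ≤ v) : Real.tanh u ≤ Real.tanh v := by
  rw [Real.tanh_eq_sinh_div_cosh, Real.tanh_eq_sinh_div_cosh,
    div_le_div_iff₀ (Real.cosh_pos u) (Real.cosh_pos v)]
  nlinarith [Real.sinh_nonneg_iff.mpr (by linarith : (0:ℝ) ≤ v - u), Real.sinh_sub v u,
    Real.cosh_pos u, Real.cosh_pos v]

lemma tanh_concave_sym {x : ℝ} (d : ℝ) (hx : 0 ≤ x) :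
    Real.tanh (x + d) + Real.tanh (x - d) ≤ 2 * Real.tanh x := by
  rw [Real.tanh_eq_sinh_div_cosh, Real.tanh_eq_sinh_div_cosh, Real.tanh_eq_sinh_div_cosh]
  have c1 := Real.cosh_pos (x + d)
  have c2 := Real.cosh_pos (x - d)
  have c3 := Real.cosh_pos x
  rw [div_add_div _ _ (ne_of_gt c1) (ne_of_gt c2), mul_div_assoc',
    div_le_div_iff₀ (by positivity) c3]
  rw [Real.sinh_add, Real.cosh_add, Real.sinh_sub, Real.cosh_sub]
  nlinarith [Real.cosh_sq d, Real.cosh_sq x, Real.sinh_nonneg_iff.mpr hx,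
    mul_nonneg (Real.sinh_nonneg_iff.mpr hx) (sq_nonneg (Real.sinh d)), Real.cosh_pos d]

lemma tanh_ineq {x d s : ℝ} (hx : 0 ≤ x) (hd : 0 ≤ d) (hs0 : 0 ≤ s) (hs1 : s ≤ 1) :
    (1 - s) * Real.tanh (x + d) + (1 + s) * Real.tanh (x - d) ≤ 2 * Real.tanh x := by
  have hmono : Real.tanh (x - d) ≤ Real.tanh (x + d) := tanh_mono' (by linarith)
  have hcs := tanh_concave_sym d hx
  nlinarith [mul_le_mul_of_nonneg_left hmono hs0]

lemma tanh_ineq' {x d s : ℝ} (hx : x ≤ 0) (hd : 0 ≤ d) (hs0 : -1 ≤ s) (hs1 : s ≤ 0) :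
    2 * Real.tanh x ≤ (1 - s) * Real.tanh (x + d) + (1 + s) * Real.tanh (x - d) := by
  have h := tanh_ineq (x := -x) (d := d) (s := -s) (by linarith) hd (by linarith) (by linarith)
  rw [show -x + d = -(x - d) by ring, show -x - d = -(x + d) by ring,
    Real.tanh_neg, Real.tanh_neg, Real.tanh_neg] at h
  linarith

/-- The key sum computation. -/
lemma sum_kernel (β : ℝ) {n : ℕ} (hn : 0 < n) (k : Fin (n + 1)) (F : ℝ → ℝ) :
    ∑ l, magKernel β n k l * F (magVal n l)
      = ((1 + magVal n k) / 2 * pMinus β (magVal n k - 1 / n)) * F (magVal n k - 2 / n)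
      + ((1 - magVal n k) / 2 * pPlus β (magVal n k + 1 / n)) * F (magVal n k + 2 / n)
      + (1 - ((1 + magVal n k) / 2 * pMinus β (magVal n k - 1 / n))
           - ((1 - magVal n k) / 2 * pPlus β (magVal n k + 1 / n))) * F (magVal n k) := by
  have hnR : (0 : ℝ) < n := Nat.cast_pos.mpr hn
  set A := (1 + magVal n k) / 2 * pMinus β (magVal n k - 1 / n) with hA
  set B := (1 - magVal n k) / 2 * pPlus β (magVal n k + 1 / n) with hB
  have hsplit : ∀ l : Fin (n + 1), magKernel β n k l * F (magVal n l)
      = (if (l : ℕ) + 1 = (k : ℕ) then A * F (magVal n l) else 0)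
      + (if (k : ℕ) + 1 = (l : ℕ) then B * F (magVal n l) else 0)
      + (if l = k then (1 - A - B) * F (magVal n l) else 0) := by
    intro l
    rcases eq_or_ne ((l : ℕ) + 1) (k : ℕ) with h1 | h1
    · have h2 : ¬((k : ℕ) + 1 = (l : ℕ)) := by omega
      have h3 : l ≠ k := fun h => by rw [h] at h1; omega
      simp only [magKernel, if_pos h1, if_neg h2, if_neg h3, add_zero]; rfl
    · rcases eq_or_ne ((k : ℕ) + 1) (l : ℕ)  with h2 | h2
      · have h3 : l ≠ k := fun h => by rw [h] at h2; omega
        simp only [magKernel, if_neg h1, if_pos h2, if_neg h3, add_zero, zero_add]; rfl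
      · rcases eq_or_ne l k with h3 | h3
        · subst h3
          simp only [magKernel, if_neg h1, if_neg h2, eq_self_iff_true, if_true, zero_add]; rfl
        · simp only [magKernel, if_neg h1, if_neg h2, if_neg h3, add_zero, zero_add, zero_mul]
  rw [Finset.sum_congr rfl (fun l _ => hsplit l), Finset.sum_add_distrib,
    Finset.sum_add_distrib]
  have hS3 : (∑ l : Fin (n + 1), if l = k then (1 - A - B) * F (magVal n l) else 0)
      = (1 - A - B) * F (magVal n k) := by
    rw [Finset.sum_ite_eq' Finset.univ k (fun l => (1 - A - B) * F (magVal n l))]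
    simp
  have hS1 : (∑ l : Fin (n + 1), if (l : ℕ) + 1 = (k : ℕ) then A * F (magVal n l) else 0)
      = A * F (magVal n k - 2 / n) := by
    rcases Nat.eq_zero_or_pos (k : ℕ) with hk0 | hk0
    · have hzero : ∀ l : Fin (n + 1), ¬((l : ℕ) + 1 = (k : ℕ)) := fun l => by omega
      have hAz : A = 0 := by
        have h0 : (1 + magVal n k) / 2 = 0 := by
          rw [magVal, hk0]
          push_cast
          field_simp
          ring
        rw [hA, h0, zero_mul]
      simp [hzero, hAz]
    · obtain ⟨m, hm⟩ := Nat.exists_eq_succ_of_ne_zero hk0.ne'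
      have hmlt : m < n + 1 := by have := k.isLt; omega
      have hcond : ∀ l : Fin (n + 1), ((l : ℕ) + 1 = (k : ℕ)) ↔ l = ⟨m, hmlt⟩ := by
        intro l
        constructor
        · intro h
          exact Fin.ext (show (l : ℕ) = m by omega)
        · intro h
          rw [h]
          show m + 1 = (k : ℕ)
          omega
      have hsum : (∑ l : Fin (n + 1), if (l : ℕ) + 1 = (k : ℕ) then A * F (magVal n l) else 0)
          = ∑ l : Fin (n + 1), if l = (⟨m, hmlt⟩ : Fin (n + 1)) then A * F (magVal n l) else 0 :=
        Finset.sum_congr rfl (fun l _ => by simp only [hcond l])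
      rw [hsum]
      simp only [Finset.sum_ite_eq', Finset.mem_univ, if_true]
      have harg : magVal n (⟨m, hmlt⟩ : Fin (n + 1)) = magVal n k - 2 / n := by
        rw [magVal, magVal]
        have hkm : ((k : ℕ) : ℝ) = (m : ℝ) + 1 := by rw [hm]; push_cast; ring
        show (2 * (m : ℝ) - n) / n = (2 * ((k : ℕ) : ℝ) - n) / n - 2 / n
        rw [hkm]
        field_simp
        ring
      rw [harg]
  have hS2 : (∑ l : Fin (n + 1), if (k : ℕ) + 1 = (l : ℕ) then B * F (magVal n l) else 0)
      = B * F (magVal n k + 2 / n) := by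
    rcases eq_or_ne (k : ℕ) n with hkn | hkn
    · have hzero : ∀ l : Fin (n + 1), ¬((k : ℕ) + 1 = (l : ℕ)) := fun l => by
        have := l.isLt; omega
      have hBz : B = 0 := by
        have h0 : (1 - magVal n k) / 2 = 0 := by
          rw [magVal, hkn]
          push_cast
          field_simp
          ring
        rw [hB, h0, zero_mul]
      simp [hzero, hBz]
    · have hlt : (k : ℕ) + 1 < n + 1 := by have := k.isLt; omega
      have hcond : ∀ l : Fin (n + 1), ((k : ℕ) + 1 = (l : ℕ)) ↔ l = ⟨(k : ℕ) + 1, hlt⟩ := by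
        intro l
        constructor
        · intro h
          exact Fin.ext (show (l : ℕ) = (k : ℕ) + 1 by omega)
        · intro h
          rw [h]
      have hsum : (∑ l : Fin (n + 1), if (k : ℕ) + 1 = (l : ℕ) then B * F (magVal n l) else 0)
          = ∑ l : Fin (n + 1), if l = (⟨(k : ℕ) + 1, hlt⟩ : Fin (n + 1))
              then B * F (magVal n l) else 0 :=
        Finset.sum_congr rfl (fun l _ => by simp only [hcond l])
      rw [hsum]
      simp only [Finset.sum_ite_eq', Finset.mem_univ, if_true]
      have harg : magVal n (⟨(k : ℕ) + 1, hlt⟩ : Fin (n + 1)) = magVal n k + 2 / n := by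
        rw [magVal, magVal]
        have hv : ((⟨(k : ℕ) + 1, hlt⟩ : Fin (n + 1)) : ℕ) = (k : ℕ) + 1 := rfl
        rw [hv]
        push_cast
        field_simp
        ring
      rw [harg]
  rw [hS1, hS2, hS3]

lemma magVal_bounds {n : ℕ} (hn : 0 < n) (k : Fin (n + 1)) :
    -1 ≤ magVal n k ∧ magVal n k ≤ 1 := by
  have hnR : (0 : ℝ) < n := Nat.cast_pos.mpr hn
  have hk0 : (0 : ℝ) ≤ ((k : ℕ) : ℝ) := Nat.cast_nonneg _
  have hkn : ((k : ℕ) : ℝ) ≤ n := Nat.cast_le.mpr (Nat.lt_succ_iff.mp k.isLt)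
  constructor
  · rw [magVal, le_div_iff₀ hnR]; linarith
  · rw [magVal, div_le_iff₀ hnR]; linarith

/-- The drift bound for `s ≥ 0`. -/
lemma drift_le (β : ℝ) (hβ : 0 ≤ β) {n : ℕ} (hn : 0 < n) {s : ℝ} (hs0 : 0 ≤ s) (hs1 : s ≤ 1) :
    ((1 + s) / 2 * pMinus β (s - 1 / n)) * (-(2 / n))
      + ((1 - s) / 2 * pPlus β (s + 1 / n)) * (2 / n)
    ≤ (1 / n) * (Real.tanh (β * s) - s) := by
  have hnR : (0 : ℝ) < n := Nat.cast_pos.mpr hn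
  have hd : 0 ≤ β * (1 / n) := by positivity
  have hts := tanh_ineq (x := β * s) (d := β * (1 / n)) (s := s)
    (by positivity) hd hs0 hs1
  rw [show β * s + β * (1 / (n:ℝ)) = β * (s + 1 / n) by ring,
    show β * s - β * (1 / (n:ℝ)) = β * (s - 1 / n) by ring] at hts
  rw [pPlus, pMinus]
  have h2 : (1 / (n : ℝ)) * ((1 - s) * Real.tanh (β * (s + 1 / n))
      + (1 + s) * Real.tanh (β * (s - 1 / n)))
      ≤ (1 / (n : ℝ)) * (2 * Real.tanh (β * s)) :=
    mul_le_mul_of_nonneg_left hts (by positivity)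
  ring_nf at h2 ⊢
  linarith [h2]

lemma drift_ge (β : ℝ) (hβ : 0 ≤ β) {n : ℕ} (hn : 0 < n) {s : ℝ} (hs0 : -1 ≤ s) (hs1 : s ≤ 0) :
    (1 / n) * (Real.tanh (β * s) - s)
      ≤ ((1 + s) / 2 * pMinus β (s - 1 / n)) * (-(2 / n))
      + ((1 - s) / 2 * pPlus β (s + 1 / n)) * (2 / n) := by
  have hnR : (0 : ℝ) < n := Nat.cast_pos.mpr hn
  have hd : 0 ≤ β * (1 / n) := by positivity
  have hts := tanh_ineq' (x := β * s) (d := β * (1 / n)) (s := s)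
    (by nlinarith) hd hs0 hs1
  rw [show β * s + β * (1 / (n:ℝ)) = β * (s + 1 / n) by ring,
    show β * s - β * (1 / (n:ℝ)) = β * (s - 1 / n) by ring] at hts
  rw [pPlus, pMinus]
  have h2 : (1 / (n : ℝ)) * (2 * Real.tanh (β * s))
      ≤ (1 / (n : ℝ)) * ((1 - s) * Real.tanh (β * (s + 1 / n))
      + (1 + s) * Real.tanh (β * (s - 1 / n))) :=
    mul_le_mul_of_nonneg_left hts (by positivity)
  ring_nf at h2 ⊢
  linarith [h2]

theorem mag_chain_drift (β : ℝ) (hβ : 0 ≤ β) (n : ℕ) (k : Fin (n + 1)) :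
    (0 ≤ magVal n k →
      ∑ l, magKernel β n k l * (magVal n l - magVal n k) ≤
        (1 / (n : ℝ)) * (Real.tanh (β * magVal n k) - magVal n k)) ∧
    (magVal n k ≤ 0 →
      (1 / (n : ℝ)) * (Real.tanh (β * magVal n k) - magVal n k) ≤
        ∑ l, magKernel β n k l * (magVal n l - magVal n k)) ∧
    (1 / (n : ℝ) < |magVal n k| →
      ∑ l, magKernel β n k l * |magVal n l| ≤
        |magVal n k| +
          (1 / (n : ℝ)) * (Real.tanh (β * |magVal n k|) - |magVal n k|)) := by
  rcases Nat.eq_zero_or_pos n with hn | hn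
  · subst hn
    have hmv : ∀ l : Fin (0 + 1), magVal 0 l = 0 := fun l => by simp [magVal]
    refine ⟨?_, ?_, ?_⟩ <;> simp [hmv]
  -- n > 0
  have hnR : (0 : ℝ) < n := Nat.cast_pos.mpr hn
  obtain ⟨hlb, hub⟩ := magVal_bounds hn k
  set s := magVal n k with hs
  set A := (1 + s) / 2 * pMinus β (s - 1 / n) with hA
  set B := (1 - s) / 2 * pPlus β (s + 1 / n) with hB
  have hdiff : ∑ l, magKernel β n k l * (magVal n l - s)
      = A * (-(2 / n)) + B * (2 / n) := by
    rw [sum_kernel β hn k (fun x => x - s)]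
    rw [← hs, ← hA, ← hB]
    ring
  refine ⟨?_, ?_, ?_⟩
  · intro hpos
    rw [hdiff]
    have h := drift_le β hβ hn hpos hub
    rw [← hA, ← hB] at h
    exact h
  · intro hneg
    rw [hdiff]
    have h := drift_ge β hβ hn hlb hneg
    rw [← hA, ← hB] at h
    exact h
  · intro habs
    have habssum : ∑ l, magKernel β n k l * |magVal n l|
        = A * |s - 2 / n| + B * |s + 2 / n| + (1 - A - B) * |s| := by
      rw [sum_kernel β hn k (fun x => |x|)]
    rcases abs_cases s with ⟨he, hpos⟩ | ⟨he, hneg⟩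
    · -- s ≥ 0 and s > 1/n
      rw [he] at habs
      have hk2 : 0 ≤ s - 2 / n := by
        rw [hs, magVal] at habs ⊢
        rw [div_lt_div_iff₀ hnR hnR] at habs
        have h1 : (n : ℝ) + 1 < 2 * ((k : ℕ) : ℝ) := by nlinarith
        have h2 : n + 1 < 2 * (k : ℕ) := by exact_mod_cast h1
        have h3 : n + 2 ≤ 2 * (k : ℕ) := by omega
        have h4 : (n : ℝ) + 2 ≤ 2 * ((k : ℕ) : ℝ) := by exact_mod_cast h3
        rw [sub_nonneg, div_le_div_iff₀ hnR hnR]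
        nlinarith
      have hk3 : 0 ≤ s + 2 / n := by
        have : (0:ℝ) < 2 / n := by positivity
        linarith
      rw [habssum, he, abs_of_nonneg hk2, abs_of_nonneg hk3]
      have hdle := drift_le β hβ hn hpos hub
      rw [← hA, ← hB] at hdle
      linarith [hdle]
    · -- s ≤ 0 and -s > 1/n
      rw [he] at habs
      have hk2 : s + 2 / n ≤ 0 := by
        have habs' : s < -(1 / n) := by linarith
        rw [hs, magVal] at habs' ⊢
        rw [show -(1 / (n:ℝ)) = (-1) / n by ring, div_lt_div_iff₀ hnR hnR] at habs'
        have h1 : 2 * ((k : ℕ) : ℝ) < (n : ℝ) - 1 := by nlinarith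
        have h2 : 2 * (k : ℕ) + 1 < n := by
          have : (2 * (k : ℕ) : ℝ) + 1 < (n : ℝ) := by push_cast; linarith
          exact_mod_cast this
        have h3 : 2 * (k : ℕ) + 2 ≤ n := by omega
        have h4 : (2 * (k : ℕ) : ℝ) + 2 ≤ (n : ℝ) := by exact_mod_cast h3
        have heq : (2 * ((k:ℕ):ℝ) - n) / n + 2 / n = (2 * ((k:ℕ):ℝ) - n + 2) / n := by
          ring
        rw [heq]
        apply div_nonpos_of_nonpos_of_nonneg _ hnR.le
        push_cast at h4 ⊢
        linarith
      have hs2 : s - 2 / n ≤ 0 := by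
        have : (0:ℝ) < 2 / n := by positivity
        linarith
      rw [habssum, he, abs_of_nonpos hk2, abs_of_nonpos hs2]
      have hdge := drift_ge β hβ hn hlb hneg.le
      rw [← hA, ← hB] at hdge
      rw [show β * -s = -(β * s) by ring, Real.tanh_neg]
      linarith [hdge]

end

end CW
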